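/- For $\mu > 0$ and $t \ge 0$, $\int_0^t \mu^{3/2}\sqrt{6/\pi}\,\big(\frac{9z^2}{2} + \frac{e^{-9\mu z^2/2}-1}{\mu}\big) e^{-3\mu z^2/2}\,dz = \Phi(t\sqrt{3\mu}) + \Phi(t\sqrt{12\mu}) - 1 - 3t\sqrt{\frac{3\mu}{2\pi}} e^{-3\mu t^2/2}$, where $\Phi$ is the standard normal CDF. -/

import Mathlib

open Real MeasureTheory Set intervalIntegral

noncomputable def Phi (t : ℝ) : ℝ :=
  ∫ s in Set.Iic t, (1 / Real.sqrt (2 * Real.pi)) * Real.exp (-s ^ 2 / 2)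

noncomputable def gauss (s : ℝ) : ℝ := (1 / Real.sqrt (2 * Real.pi)) * Real.exp (-s ^ 2 / 2)

lemma gauss_integrable : Integrable gauss := by
  have h := (integrable_exp_neg_mul_sq (by norm_num : (0:ℝ) < 1/2)).const_mul
      (1 / Real.sqrt (2*Real.pi))
  refine h.congr (Filter.Eventually.of_forall fun s => ?_)
  unfold gauss; ring_nf

lemma gauss_cont : Continuous gauss := by
  unfold gauss; continuity

lemma Phi_eq (x : ℝ) : Phi x = Phi 0 + ∫ s in (0:ℝ)..x, gauss s := by
  unfold Phi
  rw [← integral_Iic_sub_Iic gauss_integrable.integrableOn gauss_integrable.integrableOn]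
  unfold gauss; ring

lemma Phi_hasDerivAt (x : ℝ) : HasDerivAt Phi (gauss x) x := by
  have h : HasDerivAt (fun u => Phi 0 + ∫ s in (0:ℝ)..u, gauss s) (gauss x) x := by
    refine HasDerivAt.const_add _ ?_
    exact intervalIntegral.integral_hasDerivAt_right
      (gauss_integrable.intervalIntegrable)
      (gauss_cont.stronglyMeasurableAtFilter _ _) gauss_cont.continuousAt
  exact h.congr_of_eventuallyEq (Filter.Eventually.of_forall fun u => (Phi_eq u))

lemma Phi_zero : Phi 0 = 1 / 2 := by
  have hsym : (∫ s in Iic (0:ℝ), gauss s) = ∫ s in Ioi (0:ℝ), gauss s := by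
    have h := integral_comp_neg_Ioi (0:ℝ) gauss
    rw [neg_zero] at h
    rw [← h]
    refine setIntegral_congr_fun measurableSet_Ioi fun s _ => ?_
    unfold gauss; ring_nf
  have htot : (∫ s : ℝ, gauss s) = 1 := by
    have h1 : (∫ s : ℝ, Real.exp (-(1/2) * s ^ 2)) = Real.sqrt (Real.pi / (1/2)) :=
      integral_gaussian (1/2)
    have : (∫ s : ℝ, gauss s) = (1 / Real.sqrt (2 * Real.pi)) * Real.sqrt (Real.pi / (1/2)) := by
      rw [← h1, ← MeasureTheory.integral_const_mul]
      congr 1 with s; unfold gauss; ring_nf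
    rw [this]
    rw [show Real.pi / (1/2) = 2 * Real.pi by ring]
    rw [one_div, inv_mul_cancel₀]
    positivity
  have hsplit : (∫ s in Iic (0:ℝ), gauss s) + (∫ s in Ioi (0:ℝ), gauss s) = 1 := by
    rw [← htot, ← setIntegral_union (Iic_disjoint_Ioi le_rfl) measurableSet_Ioi
      gauss_integrable.integrableOn gauss_integrable.integrableOn, Iic_union_Ioi,
      Measure.restrict_univ]
  have : Phi 0 = ∫ s in Iic (0:ℝ), gauss s := rfl
  rw [this]; linarith [hsym, hsplit]

theorem largest_centered_eigenvalue_cdf (μ t : ℝ) (hμ : 0 < μ) (ht : 0 ≤ t) :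
    ∫ z in (0 : ℝ)..t, μ ^ ((3 : ℝ) / 2) * Real.sqrt (6 / Real.pi) *
        (9 * z ^ 2 / 2 + (Real.exp (-9 * μ * z ^ 2 / 2) - 1) / μ)
          * Real.exp (-3 * μ * z ^ 2 / 2)
      = Phi (t * Real.sqrt (3 * μ)) + Phi (t * Real.sqrt (12 * μ)) - 1
        - 3 * t * Real.sqrt (3 * μ / (2 * Real.pi)) * Real.exp (-3 * μ * t ^ 2 / 2) := by
  have hπ : (0:ℝ) < Real.pi := Real.pi_pos
  set c₁ := Real.sqrt (3 * μ) with hc₁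
  set c₂ := Real.sqrt (12 * μ) with hc₂
  set A := Real.sqrt μ * Real.sqrt (6 / Real.pi) with hA
  set F : ℝ → ℝ := fun z => Phi (z * c₁) + Phi (z * c₂) - 1
    - 3 * z * Real.sqrt (3 * μ / (2 * Real.pi)) * Real.exp (-3 * μ * z ^ 2 / 2) with hF
  have sA : Real.sqrt (3 * μ / (2 * Real.pi)) = A / 2 := by
    rw [show 3 * μ / (2 * Real.pi) = μ * (6 / Real.pi) / 2 ^ 2 by field_simp; ring,
      Real.sqrt_div (by positivity), Real.sqrt_sq (by norm_num),
      Real.sqrt_mul hμ.le]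
  have s1 : c₁ = Real.sqrt (2 * Real.pi) * (A / 2) := by
    rw [hc₁, ← sA, ← Real.sqrt_mul (by positivity)]
    congr 1
    field_simp
  have s2 : c₂ = Real.sqrt (2 * Real.pi) * A := by
    rw [hc₂, hA, ← Real.sqrt_mul hμ.le, ← Real.sqrt_mul (by positivity)]
    congr 1
    field_simp
    ring
  have hμ32 : μ ^ ((3 : ℝ) / 2) = μ * Real.sqrt μ := by
    rw [show (3:ℝ)/2 = 1 + 1/2 by norm_num, Real.rpow_add hμ, Real.rpow_one,
      ← Real.sqrt_eq_rpow]
  have key : ∀ z : ℝ, HasDerivAt F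
      (μ ^ ((3 : ℝ) / 2) * Real.sqrt (6 / Real.pi) *
        (9 * z ^ 2 / 2 + (Real.exp (-9 * μ * z ^ 2 / 2) - 1) / μ)
          * Real.exp (-3 * μ * z ^ 2 / 2)) z := by
    intro z
    have h1 : HasDerivAt (fun z : ℝ => Phi (z * c₁)) (gauss (z * c₁) * c₁) z := by
      have := (Phi_hasDerivAt (z * c₁)).comp z ((hasDerivAt_id z).mul_const c₁)
      exact this.congr_deriv (by rw [one_mul])
    have h2 : HasDerivAt (fun z : ℝ => Phi (z * c₂)) (gauss (z * c₂) * c₂) z := by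
      have := (Phi_hasDerivAt (z * c₂)).comp z ((hasDerivAt_id z).mul_const c₂)
      exact this.congr_deriv (by rw [one_mul])
    have hexp : HasDerivAt (fun z : ℝ => Real.exp (-3 * μ * z ^ 2 / 2))
        (Real.exp (-3 * μ * z ^ 2 / 2) * (-3 * μ * z)) z := by
      have hp : HasDerivAt (fun z : ℝ => -3 * μ * z ^ 2 / 2) (-3 * μ * z) z := by
        have := ((hasDerivAt_pow 2 z).const_mul (-3 * μ)).div_const 2
        refine this.congr_deriv ?_
        ring
      exact hp.exp
    have h3 : HasDerivAt (fun z : ℝ => 3 * z * Real.sqrt (3 * μ / (2 * Real.pi)) *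
        Real.exp (-3 * μ * z ^ 2 / 2))
        (3 * Real.sqrt (3 * μ / (2 * Real.pi)) * Real.exp (-3 * μ * z ^ 2 / 2)
          + 3 * z * Real.sqrt (3 * μ / (2 * Real.pi)) *
            (Real.exp (-3 * μ * z ^ 2 / 2) * (-3 * μ * z))) z := by
      have hl : HasDerivAt (fun z : ℝ => 3 * z * Real.sqrt (3 * μ / (2 * Real.pi)))
          (3 * Real.sqrt (3 * μ / (2 * Real.pi))) z := by
        simpa using ((hasDerivAt_id z).const_mul 3).mul_const (Real.sqrt (3 * μ / (2 * Real.pi)))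
      exact hl.mul hexp
    have hd := ((h1.add h2).sub_const 1).sub h3
    refine hd.congr_deriv ?_
    have e1 : gauss (z * c₁) = (1 / Real.sqrt (2 * Real.pi)) * Real.exp (-3 * μ * z ^ 2 / 2) := by
      unfold gauss
      congr 2
      rw [hc₁, mul_pow, Real.sq_sqrt (by positivity)]
      ring
    have e2 : gauss (z * c₂) = (1 / Real.sqrt (2 * Real.pi)) * Real.exp (-6 * μ * z ^ 2) := by
      unfold gauss
      congr 2
      rw [hc₂, mul_pow, Real.sq_sqrt (by positivity)]
      ring
    have eprod : Real.exp (-6 * μ * z ^ 2) =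
        Real.exp (-9 * μ * z ^ 2 / 2) * Real.exp (-3 * μ * z ^ 2 / 2) := by
      rw [← Real.exp_add]
      ring_nf
    rw [e1, e2, sA, s1, s2, hμ32, hA, eprod]
    have h2π : Real.sqrt (2 * Real.pi) ≠ 0 := by positivity
    field_simp
    ring
  have hcont : Continuous fun z : ℝ => μ ^ ((3 : ℝ) / 2) * Real.sqrt (6 / Real.pi) *
      (9 * z ^ 2 / 2 + (Real.exp (-9 * μ * z ^ 2 / 2) - 1) / μ)
        * Real.exp (-3 * μ * z ^ 2 / 2) := by
    fun_prop
  have hint : ∫ z in (0:ℝ)..t, μ ^ ((3 : ℝ) / 2) * Real.sqrt (6 / Real.pi) *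
      (9 * z ^ 2 / 2 + (Real.exp (-9 * μ * z ^ 2 / 2) - 1) / μ)
        * Real.exp (-3 * μ * z ^ 2 / 2) = F t - F 0 :=
    intervalIntegral.integral_eq_sub_of_hasDerivAt (fun x _ => key x)
      (hcont.intervalIntegrable 0 t)
  have hF0 : F 0 = 0 := by
    simp [hF, Phi_zero]
    norm_num [Phi_zero]
  rw [hint, hF0, sub_zero]
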